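/- At every point of U, ỹ satisfies the Riccati equation along forward characteristics: ỹ_t + c·ỹ_x = ã₀ + ã₁·ỹ + ã₂·ỹ². -/

import Mathlib

open Real

/-- Partial derivative with respect to `t` (the first coordinate). -/
noncomputable def pdt (f : ℝ × ℝ → ℝ) (pt : ℝ × ℝ) : ℝ := fderiv ℝ f pt (1, 0)

/-- Partial derivative with respect to `x` (the second coordinate). -/
noncomputable def pdx (f : ℝ × ℝ → ℝ) (pt : ℝ × ℝ) : ℝ := fderiv ℝ f pt (0, 1)


lemma hasFDerivAt_pd (f : ℝ × ℝ → ℝ) (pt : ℝ × ℝ) (hf : ContDiffAt ℝ 2 f pt) (w : ℝ × ℝ) :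
    HasFDerivAt (fun p => fderiv ℝ f p w)
      ((ContinuousLinearMap.apply ℝ ℝ w).comp (fderiv ℝ (fderiv ℝ f) pt)) pt := by
  have h1 : DifferentiableAt ℝ (fderiv ℝ f) pt :=
    (hf.fderiv_right (le_refl 2)).differentiableAt one_ne_zero
  exact ((ContinuousLinearMap.apply ℝ ℝ w).hasFDerivAt).comp pt h1.hasFDerivAt

lemma rpow_W (Z : ℝ) (hZ : 0 < Z) (K x : ℝ) (n j : ℕ) (h : x = (K - 1) * n + j) :
    Z ^ x = (Z ^ (K - 1)) ^ n * Z ^ j := by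
  rw [h, Real.rpow_add hZ, Real.rpow_mul hZ.le, Real.rpow_natCast, Real.rpow_natCast]

set_option maxHeartbeats 2000000 in
/-- Riccati equation for `ỹ` along forward characteristics:
`ỹ′ = ã₀ + ã₁·ỹ + ã₂·ỹ²` on `U`. -/
theorem stmt_7
    (γ Kc : ℝ) (hγ : 1 < γ) (hKc : 0 < Kc)
    (U : Set (ℝ × ℝ)) (hU : IsOpen U)
    (u z m : ℝ × ℝ → ℝ)
    (hu : ContDiffOn ℝ 2 u U) (hz : ContDiffOn ℝ 2 z U) (hm : ContDiffOn ℝ 2 m U)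
    (hzpos : ∀ pt ∈ U, 0 < z pt) (hmpos : ∀ pt ∈ U, 0 < m pt)
    (c p : ℝ × ℝ → ℝ)
    (hc : c = fun pt => Kc * m pt * z pt ^ ((γ + 1) / (γ - 1)))
    (hp : p = fun pt => ((γ - 1) / (2 * γ) * Kc) * (m pt) ^ 2 * z pt ^ (2 * γ / (γ - 1)))
    (heq1 : ∀ pt ∈ U, pdt z pt + (c pt / m pt) * pdx u pt = 0)
    (heq2 : ∀ pt ∈ U, pdt u pt + m pt * c pt * pdx z pt + 2 * (p pt / m pt) * pdx m pt = 0)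
    (heq3 : ∀ pt ∈ U, pdt m pt = 0)
    (α β : ℝ × ℝ → ℝ)
    (hα : α = fun pt => pdx u pt + m pt * pdx z pt + ((γ - 1) / γ) * pdx m pt * z pt)
    (hβ : β = fun pt => pdx u pt - m pt * pdx z pt - ((γ - 1) / γ) * pdx m pt * z pt)
    (yt qt : ℝ × ℝ → ℝ)
    (hyt : yt = fun pt => z pt ^ ((γ + 1) / (2 * (γ - 1))) * α pt
      + ((γ - 1) / (γ * (3 * γ - 1))) * z pt ^ ((γ + 1) / (2 * (γ - 1)) + 1) * pdx m pt)
    (hqt : qt = fun pt => z pt ^ ((γ + 1) / (2 * (γ - 1))) * β pt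
      - ((γ - 1) / (γ * (3 * γ - 1))) * z pt ^ ((γ + 1) / (2 * (γ - 1)) + 1) * pdx m pt)
    (a0t : ℝ × ℝ → ℝ)
    (ha0t : a0t = fun pt => (Kc / γ) * (((γ - 1) / (3 * γ - 1)) * m pt * pdx (pdx m) pt
      - ((3 * γ + 1) * (γ - 1) / (3 * γ - 1) ^ 2) * (pdx m pt) ^ 2)
      * z pt ^ (3 * (γ + 1) / (2 * (γ - 1)) + 1))
    (a1t : ℝ × ℝ → ℝ)
    (ha1t : a1t = fun pt => Kc * (3 * (3 - γ) / (2 * (3 * γ - 1))) * pdx m pt * z pt ^ ((γ + 1) / (γ - 1)))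
    (a2t : ℝ × ℝ → ℝ)
    (ha2t : a2t = fun pt => -Kc * ((γ + 1) / (2 * (γ - 1))) * z pt ^ ((γ + 1) / (2 * (γ - 1)) - 1))
 :
    ∀ pt ∈ U, pdt yt pt + c pt * pdx yt pt
      = a0t pt + a1t pt * yt pt + a2t pt * (yt pt) ^ 2 := by
  intro pt hpt
  subst hc hp hα hβ hyt hqt ha0t ha1t ha2t
  have hγ1 : γ - 1 ≠ 0 := by linarith
  have hγ0 : γ ≠ 0 := by linarith
  have h3γ : 3 * γ - 1 ≠ 0 := by linarith
  have hZ : 0 < z pt := hzpos pt hpt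
  have hM : 0 < m pt := hmpos pt hpt
  have hz2 : ContDiffAt ℝ 2 z pt := hz.contDiffAt (hU.mem_nhds hpt)
  have hu2 : ContDiffAt ℝ 2 u pt := hu.contDiffAt (hU.mem_nhds hpt)
  have hm2 : ContDiffAt ℝ 2 m pt := hm.contDiffAt (hU.mem_nhds hpt)
  have hzd : HasFDerivAt z (fderiv ℝ z pt) pt :=
    (hz2.differentiableAt two_ne_zero).hasFDerivAt
  have hmd : HasFDerivAt m (fderiv ℝ m pt) pt :=
    (hm2.differentiableAt two_ne_zero).hasFDerivAt
  have hux := hasFDerivAt_pd u pt hu2 (0, 1)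
  have hzx := hasFDerivAt_pd z pt hz2 (0, 1)
  have hmx := hasFDerivAt_pd m pt hm2 (0, 1)
  have hzt := hasFDerivAt_pd z pt hz2 (1, 0)
  have hut := hasFDerivAt_pd u pt hu2 (1, 0)
  have hmt := hasFDerivAt_pd m pt hm2 (1, 0)
  have hsymz := hz2.isSymmSndFDerivAt (by rw [minSmoothness_of_isRCLikeNormedField])
  have hsymu := hu2.isSymmSndFDerivAt (by rw [minSmoothness_of_isRCLikeNormedField])
  have hsymm := hm2.isSymmSndFDerivAt (by rw [minSmoothness_of_isRCLikeNormedField])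
  simp only [pdt, pdx]
  rw [show pdx m = fun p => fderiv ℝ m p (0, 1) from rfl]
  -- derivative of yt
  have hpK : HasFDerivAt (fun p => z p ^ ((γ + 1) / (2 * (γ - 1))))
      ((((γ + 1) / (2 * (γ - 1))) * z pt ^ ((γ + 1) / (2 * (γ - 1)) - 1)) • fderiv ℝ z pt) pt :=
    hzd.rpow_const (Or.inl hZ.ne')
  have hpK1 : HasFDerivAt (fun p => z p ^ ((γ + 1) / (2 * (γ - 1)) + 1))
      ((((γ + 1) / (2 * (γ - 1)) + 1) * z pt ^ ((γ + 1) / (2 * (γ - 1)) + 1 - 1)) • fderiv ℝ z pt) pt :=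
    hzd.rpow_const (Or.inl hZ.ne')
  have hyd := (hpK.mul ((hux.add (hmd.mul hzx)).add ((hmx.const_mul ((γ - 1) / γ)).mul hzd))).add
      ((hpK1.const_mul ((γ - 1) / (γ * (3 * γ - 1)))).mul hmx)
  have e1 := hyd.fderiv
  simp only [Pi.mul_def, Pi.add_def] at e1
  rw [e1]
  -- relation eq3 : pdt m vanishes on U
  have h3ev : (fun p => fderiv ℝ m p (1, 0)) =ᶠ[nhds pt] (fun _ => (0 : ℝ)) := by
    filter_upwards [hU.mem_nhds hpt] with q hq
    exact heq3 q hq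
  have h3D : ((ContinuousLinearMap.apply ℝ ℝ (1, 0)).comp (fderiv ℝ (fderiv ℝ m) pt)) = 0 := by
    rw [← hmt.fderiv, h3ev.fderiv_eq]
    exact fderiv_const_apply 0
  have hmxt : fderiv ℝ (fderiv ℝ m) pt (1, 0) (0, 1) = 0 := by
    have := congrArg (fun (L : (ℝ × ℝ) →L[ℝ] ℝ) => L (0, 1)) h3D
    simpa [hsymm.eq (0,1) (1,0)] using this
  have hmt0 : fderiv ℝ m pt (1, 0) = 0 := heq3 pt hpt
  -- relation eq1 differentiated
  have hpE : HasFDerivAt (fun p => z p ^ ((γ + 1) / (γ - 1)))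
      ((((γ + 1) / (γ - 1)) * z pt ^ ((γ + 1) / (γ - 1) - 1)) • fderiv ℝ z pt) pt :=
    hzd.rpow_const (Or.inl hZ.ne')
  have hG1 := hzt.add ((hpE.const_mul Kc).mul hux)
  have h1ev : (fun p => fderiv ℝ z p (1, 0) + Kc * z p ^ ((γ + 1) / (γ - 1)) * fderiv ℝ u p (0, 1))
      =ᶠ[nhds pt] (fun _ => (0 : ℝ)) := by
    filter_upwards [hU.mem_nhds hpt] with q hq
    have h := heq1 q hq
    simp only [pdt, pdx] at h
    have hmq : m q ≠ 0 := (hmpos q hq).ne'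
    have e : Kc * m q * z q ^ ((γ + 1) / (γ - 1)) / m q = Kc * z q ^ ((γ + 1) / (γ - 1)) := by
      field_simp
    rw [e] at h
    exact h
  have h1D := hG1.fderiv
  simp only [Pi.mul_def, Pi.add_def] at h1D
  rw [h1ev.fderiv_eq, fderiv_const_apply 0] at h1D
  have R1x := congrArg (fun (L : (ℝ × ℝ) →L[ℝ] ℝ) => L (0, 1)) h1D.symm
  simp only [ContinuousLinearMap.add_apply, ContinuousLinearMap.comp_apply,
    ContinuousLinearMap.apply_apply, ContinuousLinearMap.smul_apply, smul_eq_mul,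
    ContinuousLinearMap.zero_apply] at R1x
  rw [hsymz.eq (0,1) (1,0)] at R1x
  -- relation eq1 at the point
  have R1 : fderiv ℝ z pt (1, 0) = -(Kc * z pt ^ ((γ + 1) / (γ - 1)) * fderiv ℝ u pt (0, 1)) := by
    have h := heq1 pt hpt
    simp only [pdt, pdx] at h
    have e : Kc * m pt * z pt ^ ((γ + 1) / (γ - 1)) / m pt = Kc * z pt ^ ((γ + 1) / (γ - 1)) := by
      field_simp
    rw [e] at h
    linarith
  -- relation eq2 differentiated
  have hpE2 : HasFDerivAt (fun p => z p ^ (2 * γ / (γ - 1)))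
      (((2 * γ / (γ - 1)) * z pt ^ (2 * γ / (γ - 1) - 1)) • fderiv ℝ z pt) pt :=
    hzd.rpow_const (Or.inl hZ.ne')
  have hG2 := (hut.add ((((hmd.mul hmd).const_mul Kc).mul hpE).mul hzx)).add
      ((((hmd.const_mul (Kc * (γ - 1) / γ)).mul hpE2)).mul hmx)
  have h2ev : (fun p => fderiv ℝ u p (1, 0)
        + Kc * (m p * m p) * z p ^ ((γ + 1) / (γ - 1)) * fderiv ℝ z p (0, 1)
        + Kc * (γ - 1) / γ * m p * z p ^ (2 * γ / (γ - 1)) * fderiv ℝ m p (0, 1))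
      =ᶠ[nhds pt] (fun _ => (0 : ℝ)) := by
    filter_upwards [hU.mem_nhds hpt] with q hq
    have h := heq2 q hq
    simp only [pdt, pdx] at h
    have hmq : m q ≠ 0 := (hmpos q hq).ne'
    have e2 : (γ - 1) / (2 * γ) * Kc * m q ^ 2 * z q ^ (2 * γ / (γ - 1)) / m q
        = (γ - 1) / (2 * γ) * Kc * m q * z q ^ (2 * γ / (γ - 1)) := by
      field_simp
    rw [e2] at h
    linear_combination h
  have h2D := hG2.fderiv
  simp only [Pi.mul_def, Pi.add_def] at h2D
  rw [h2ev.fderiv_eq, fderiv_const_apply 0] at h2D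
  have R2x := congrArg (fun (L : (ℝ × ℝ) →L[ℝ] ℝ) => L (0, 1)) h2D.symm
  simp only [ContinuousLinearMap.add_apply, ContinuousLinearMap.comp_apply,
    ContinuousLinearMap.apply_apply, ContinuousLinearMap.smul_apply, smul_eq_mul,
    ContinuousLinearMap.zero_apply] at R2x
  rw [hsymu.eq (0,1) (1,0)] at R2x
  -- expand everything
  simp only [ContinuousLinearMap.add_apply, ContinuousLinearMap.comp_apply,
    ContinuousLinearMap.apply_apply, ContinuousLinearMap.smul_apply, smul_eq_mul]
  rw [(hasFDerivAt_pd m pt hm2 (0,1)).fderiv]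
  simp only [ContinuousLinearMap.comp_apply, ContinuousLinearMap.apply_apply]
  rw [hmt0, hmxt]
  -- solved forms for mixed second derivatives
  have huxt : ((fderiv ℝ (fderiv ℝ u) pt) (1, 0)) (0, 1)
      = -((Kc * (m pt * m pt) * z pt ^ ((γ + 1) / (γ - 1)) * ((fderiv ℝ (fderiv ℝ z) pt) (0, 1)) (0, 1) +
          (fderiv ℝ z pt) (0, 1) *
            (Kc * (m pt * m pt) * ((γ + 1) / (γ - 1) * z pt ^ ((γ + 1) / (γ - 1) - 1) * (fderiv ℝ z pt) (0, 1)) +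
              z pt ^ ((γ + 1) / (γ - 1)) * (Kc * (m pt * (fderiv ℝ m pt) (0, 1) + m pt * (fderiv ℝ m pt) (0, 1))))) +
      (Kc * (γ - 1) / γ * m pt * z pt ^ (2 * γ / (γ - 1)) * ((fderiv ℝ (fderiv ℝ m) pt) (0, 1)) (0, 1) +
        (fderiv ℝ m pt) (0, 1) *
          (Kc * (γ - 1) / γ * m pt * (2 * γ / (γ - 1) * z pt ^ (2 * γ / (γ - 1) - 1) * (fderiv ℝ z pt) (0, 1)) +
            z pt ^ (2 * γ / (γ - 1)) * (Kc * (γ - 1) / γ * (fderiv ℝ m pt) (0, 1))))) := by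
    linear_combination R2x
  have hzxt : ((fderiv ℝ (fderiv ℝ z) pt) (1, 0)) (0, 1)
      = -(Kc * z pt ^ ((γ + 1) / (γ - 1)) * ((fderiv ℝ (fderiv ℝ u) pt) (0, 1)) (0, 1) +
          (fderiv ℝ u pt) (0, 1) *
            (Kc * ((γ + 1) / (γ - 1) * z pt ^ ((γ + 1) / (γ - 1) - 1) * (fderiv ℝ z pt) (0, 1)))) := by
    linear_combination R1x
  rw [huxt, hzxt, R1]
  -- rewrite rpow powers in terms of W = z pt ^ (K - 1)
  have c1 : z pt ^ ((γ + 1) / (2 * (γ - 1)))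
      = (z pt ^ ((γ + 1) / (2 * (γ - 1)) - 1)) ^ 1 * z pt ^ 1 :=
    rpow_W (z pt) hZ ((γ + 1) / (2 * (γ - 1))) _ 1 1 (by push_cast; field_simp; try ring)
  have c2 : z pt ^ ((γ + 1) / (2 * (γ - 1)) + 1)
      = (z pt ^ ((γ + 1) / (2 * (γ - 1)) - 1)) ^ 1 * z pt ^ 2 :=
    rpow_W (z pt) hZ ((γ + 1) / (2 * (γ - 1))) _ 1 2 (by push_cast; field_simp; try ring)
  have c3 : z pt ^ ((γ + 1) / (2 * (γ - 1)) + 1 - 1)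
      = (z pt ^ ((γ + 1) / (2 * (γ - 1)) - 1)) ^ 1 * z pt ^ 1 :=
    rpow_W (z pt) hZ ((γ + 1) / (2 * (γ - 1))) _ 1 1 (by push_cast; field_simp; try ring)
  have c4 : z pt ^ ((γ + 1) / (γ - 1))
      = (z pt ^ ((γ + 1) / (2 * (γ - 1)) - 1)) ^ 2 * z pt ^ 2 :=
    rpow_W (z pt) hZ ((γ + 1) / (2 * (γ - 1))) _ 2 2 (by push_cast; field_simp; try ring)
  have c5 : z pt ^ ((γ + 1) / (γ - 1) - 1)
      = (z pt ^ ((γ + 1) / (2 * (γ - 1)) - 1)) ^ 2 * z pt ^ 1 :=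
    rpow_W (z pt) hZ ((γ + 1) / (2 * (γ - 1))) _ 2 1 (by push_cast; field_simp; try ring)
  have c6 : z pt ^ (2 * γ / (γ - 1))
      = (z pt ^ ((γ + 1) / (2 * (γ - 1)) - 1)) ^ 2 * z pt ^ 3 :=
    rpow_W (z pt) hZ ((γ + 1) / (2 * (γ - 1))) _ 2 3 (by push_cast; field_simp; try ring)
  have c7 : z pt ^ (2 * γ / (γ - 1) - 1)
      = (z pt ^ ((γ + 1) / (2 * (γ - 1)) - 1)) ^ 2 * z pt ^ 2 :=
    rpow_W (z pt) hZ ((γ + 1) / (2 * (γ - 1))) _ 2 2 (by push_cast; field_simp; try ring)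
  have c8 : z pt ^ (3 * (γ + 1) / (2 * (γ - 1)) + 1)
      = (z pt ^ ((γ + 1) / (2 * (γ - 1)) - 1)) ^ 3 * z pt ^ 4 :=
    rpow_W (z pt) hZ ((γ + 1) / (2 * (γ - 1))) _ 3 4 (by push_cast; field_simp; try ring)
  rw [c2, c3, c4, c5, c6, c7, c8, c1]
  generalize z pt ^ ((γ + 1) / (2 * (γ - 1)) - 1) = W
  have h3γ' : γ * 3 - 1 ≠ 0 := by linarith
  field_simp
  ring
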